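/- Every hyperbolic trapezoid A1A2B2B1 (with right angles at B1, B2) satisfies area(A1A2B2B1) ≤ |A1A2|, i.e., its area is at most the length of its upper edge. -/

import Mathlib

open Real

/-! Hyperboloid model of the hyperbolic plane `H²` of curvature `-1`:
points are `p : ℝ × ℝ × ℝ` with `mink p p = 1` and `p.1 > 0`, where `mink` is the
Minkowski bilinear form of signature `(+,-,-)`.  Distances satisfy
`cosh (hdist p q) = mink p q` and angles are computed by the hyperbolic cosine law. -/

/-- Minkowski bilinear form on `ℝ^{1,2}`. -/
def mink (p q : ℝ × ℝ × ℝ) : ℝ := p.1 * q.1 - p.2.1 * q.2.1 - p.2.2 * q.2.2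

/-- Inverse hyperbolic cosine. -/
noncomputable def arcosh (x : ℝ) : ℝ := Real.log (x + Real.sqrt (x ^ 2 - 1))

/-- Hyperbolic distance between points of the hyperboloid. -/
noncomputable def hdist (p q : ℝ × ℝ × ℝ) : ℝ := _root_.arcosh (mink p q)

/-- Angle at `p` between the geodesic segments from `p` to `q` and from `p` to `r`. -/
noncomputable def hangle (p q r : ℝ × ℝ × ℝ) : ℝ :=
  Real.arccos ((mink p q * mink p r - mink q r) /
    (Real.sqrt (mink p q ^ 2 - 1) * Real.sqrt (mink p r ^ 2 - 1)))

/-- The point at signed arclength `s` along the base geodesic line `{x₂ = 0}` (the "lower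
line"), moved to (signed) height `h` along the perpendicular at that point. -/
noncomputable def Pt (s h : ℝ) : ℝ × ℝ × ℝ :=
  (Real.cosh s * Real.cosh h, Real.sinh s * Real.cosh h, Real.sinh h)


noncomputable def gfun (x : ℝ) : ℝ :=
  (Real.log (1 + x) - Real.log (1 - x)) / 2 - Real.arcsin x

lemma gfun_hasDeriv {x : ℝ} (hx : x ∈ Set.Ioo (-1 : ℝ) 1) :
    HasDerivAt gfun (1 / (1 - x ^ 2) - 1 / Real.sqrt (1 - x ^ 2)) x := by
  obtain ⟨hxa, hxb⟩ := hx
  have h1 : (0:ℝ) < 1 + x := by linarith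
  have h2 : (0:ℝ) < 1 - x := by linarith
  have h3 : (1:ℝ) - x ^ 2 ≠ 0 := by nlinarith
  have d1 : HasDerivAt (fun y : ℝ => Real.log (1 + y)) (1 / (1 + x)) x := by
    simpa using ((hasDerivAt_id x).const_add 1).log h1.ne'
  have d2 : HasDerivAt (fun y : ℝ => Real.log (1 - y)) (-1 / (1 - x)) x := by
    simpa using ((hasDerivAt_id x).const_sub 1).log h2.ne'
  have d3 : HasDerivAt Real.arcsin (1 / Real.sqrt (1 - x ^ 2)) x :=
    Real.hasDerivAt_arcsin (by linarith) (by linarith)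
  have d := ((d1.sub d2).div_const 2).sub d3
  have hval : (1 / (1 + x) - -1 / (1 - x)) / 2 = 1 / (1 - x ^ 2) := by
    field_simp
    ring
  rw [hval] at d
  exact d

lemma gfun_mono : MonotoneOn gfun (Set.Ioo (-1 : ℝ) 1) := by
  apply monotoneOn_of_deriv_nonneg (convex_Ioo _ _)
  · intro x hx
    exact (gfun_hasDeriv hx).continuousAt.continuousWithinAt
  · intro x hx
    rw [interior_Ioo] at hx
    exact (gfun_hasDeriv hx).differentiableAt.differentiableWithinAt
  · intro x hx
    rw [interior_Ioo] at hx
    rw [(gfun_hasDeriv hx).deriv]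
    obtain ⟨hxa, hxb⟩ := hx
    have h2 : (0:ℝ) < 1 - x ^ 2 := by nlinarith
    have h4 : 0 < Real.sqrt (1 - x ^ 2) := Real.sqrt_pos.mpr h2
    have h3 : 1 - x ^ 2 ≤ Real.sqrt (1 - x ^ 2) := by
      nlinarith [Real.sq_sqrt h2.le, Real.sqrt_nonneg (1 - x ^ 2)]
    have h5 := one_div_le_one_div_of_le h2 h3
    linarith

lemma gfun_odd (y : ℝ) : gfun (-y) = -gfun y := by
  unfold gfun
  rw [show (1 : ℝ) + -y = 1 - y by ring, show (1 : ℝ) - -y = 1 + y by ring,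
    Real.arcsin_neg]
  ring

lemma main_ineq (c p q S : ℝ) (hc : 1 < c) (hS2 : S ^ 2 = c ^ 2 - 1) (hS0 : 0 < S)
    (hp2 : p ^ 2 < S ^ 2) (hq2 : q ^ 2 < S ^ 2) (hpq : 0 ≤ p + q)
    (hQ : 0 ≤ c ^ 2 - 1 + p * q - c * (p + q)) :
    Real.arcsin (p / S) + Real.arcsin (q / S) ≤ Real.log (c + S) := by
  have hpS : |p| < S := by
    have := Real.sqrt_lt_sqrt (sq_nonneg p) hp2
    rwa [Real.sqrt_sq_eq_abs, Real.sqrt_sq hS0.le] at this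
  have hqS : |q| < S := by
    have := Real.sqrt_lt_sqrt (sq_nonneg q) hq2
    rwa [Real.sqrt_sq_eq_abs, Real.sqrt_sq hS0.le] at this
  obtain ⟨hp1, hp1'⟩ := abs_lt.mp hpS
  obtain ⟨hq1, hq1'⟩ := abs_lt.mp hqS
  have hu1a : -1 < p / S := by rw [lt_div_iff₀ hS0]; linarith
  have hu1b : p / S < 1 := (div_lt_one hS0).mpr hp1'
  have hu2a : -1 < q / S := by rw [lt_div_iff₀ hS0]; linarith
  have hu2b : q / S < 1 := (div_lt_one hS0).mpr hq1'
  -- step A : arcsin ≤ artanh-type bound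
  have hmem1 : -(p / S) ∈ Set.Ioo (-1 : ℝ) 1 := ⟨by linarith, by linarith⟩
  have hmem2 : q / S ∈ Set.Ioo (-1 : ℝ) 1 := ⟨hu2a, hu2b⟩
  have hle : -(p / S) ≤ q / S := by
    have h0 : 0 ≤ (p + q) / S := div_nonneg hpq hS0.le
    rw [add_div] at h0
    linarith
  have hmono := gfun_mono hmem1 hmem2 hle
  rw [gfun_odd] at hmono
  have stepA : Real.arcsin (p / S) + Real.arcsin (q / S) ≤
      (Real.log (1 + p / S) - Real.log (1 - p / S)) / 2 +
      (Real.log (1 + q / S) - Real.log (1 - q / S)) / 2 := by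
    unfold gfun at hmono
    linarith
  -- rewrite logs
  have hSp : 0 < S + p := by linarith
  have hSmp : 0 < S - p := by linarith
  have hSq : 0 < S + q := by linarith
  have hSmq : 0 < S - q := by linarith
  have e1 : 1 + p / S = (S + p) / S := by rw [eq_div_iff hS0.ne']; ring_nf; field_simp
  have e2 : 1 - p / S = (S - p) / S := by rw [eq_div_iff hS0.ne']; ring_nf; field_simp
  have e3 : 1 + q / S = (S + q) / S := by rw [eq_div_iff hS0.ne']; ring_nf; field_simp
  have e4 : 1 - q / S = (S - q) / S := by rw [eq_div_iff hS0.ne']; ring_nf; field_simp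
  rw [e1, e2, e3, e4, Real.log_div hSp.ne' hS0.ne', Real.log_div hSmp.ne' hS0.ne',
    Real.log_div hSq.ne' hS0.ne', Real.log_div hSmq.ne' hS0.ne'] at stepA
  -- step B
  have hcS : 0 < c + S := by linarith
  have iden : (c + S) ^ 2 * ((S - p) * (S - q)) - (S + p) * (S + q) =
      2 * S * ((c + S) * (c ^ 2 - 1 + p * q - c * (p + q))) := by
    linear_combination (S ^ 2 + 2 * S * c - S * p - S * q - p * q) * hS2
  have hprod : 0 ≤ 2 * S * ((c + S) * (c ^ 2 - 1 + p * q - c * (p + q))) :=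
    mul_nonneg (by linarith) (mul_nonneg hcS.le hQ)
  have key : (S + p) * (S + q) ≤ (c + S) ^ 2 * ((S - p) * (S - q)) := by linarith
  have l1 : Real.log ((S + p) * (S + q)) ≤ Real.log ((c + S) ^ 2 * ((S - p) * (S - q))) :=
    (Real.log_le_log_iff (mul_pos hSp hSq) (mul_pos (pow_pos hcS 2) (mul_pos hSmp hSmq))).mpr
      key
  rw [Real.log_mul hSp.ne' hSq.ne',
    Real.log_mul (pow_pos hcS 2).ne' (mul_pos hSmp hSmq).ne',
    Real.log_mul hSmp.ne' hSmq.ne', Real.log_pow] at l1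
  push_cast at l1
  linarith

set_option maxHeartbeats 1000000 in
/-- Every hyperbolic trapezoid `A₁A₂B₂B₁` (right angles at `B₁`, `B₂`) has area at most the
length of its upper edge `A₁A₂`.  Here the trapezoid has lower vertices `B₁ = Pt 0 0`,
`B₂ = Pt a 0` and upper vertices `A₁ = Pt 0 h₁`, `A₂ = Pt a h₂`, and its area is the angle
defect `2π - (α₁₂ + α₂₁ + π/2 + π/2)` where `α₁₂`, `α₂₁` are the angles at `A₁`, `A₂`. -/
theorem trapezoid_area_le_upper_edge (a h₁ h₂ : ℝ) (ha : 0 < a) (h1 : 0 < h₁) (h2 : 0 < h₂) :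
    2 * π - (hangle (Pt 0 h₁) (Pt a h₂) (Pt 0 0) + hangle (Pt a h₂) (Pt 0 h₁) (Pt a 0)
        + π / 2 + π / 2) ≤
      hdist (Pt 0 h₁) (Pt a h₂) := by
  have hy1 : 0 < Real.sinh h₁ := Real.sinh_pos_iff.mpr h1
  have hy2 : 0 < Real.sinh h₂ := Real.sinh_pos_iff.mpr h2
  have hA : 1 < Real.cosh a := Real.one_lt_cosh.mpr ha.ne'
  have hx1 : 1 ≤ Real.cosh h₁ := Real.one_le_cosh h₁
  have hx2 : 1 ≤ Real.cosh h₂ := Real.one_le_cosh h₂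
  have hx1x2' : 1 + Real.sinh h₁ * Real.sinh h₂ ≤ Real.cosh h₁ * Real.cosh h₂ := by
    have := Real.one_le_cosh (h₁ - h₂)
    rw [Real.cosh_sub] at this
    linarith
  have h11' : 0 < Real.cosh h₁ - Real.sinh h₁ := by
    rw [Real.cosh_sub_sinh]; exact Real.exp_pos _
  have h22' : 0 < Real.cosh h₂ - Real.sinh h₂ := by
    rw [Real.cosh_sub_sinh]; exact Real.exp_pos _
  have py1 : Real.cosh h₁ ^ 2 = Real.sinh h₁ ^ 2 + 1 := Real.cosh_sq h₁
  have py2 : Real.cosh h₂ ^ 2 = Real.sinh h₂ ^ 2 + 1 := Real.cosh_sq h₂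
  -- mink computations
  have m12 : mink (Pt 0 h₁) (Pt a h₂) =
      Real.cosh a * (Real.cosh h₁ * Real.cosh h₂) - Real.sinh h₁ * Real.sinh h₂ := by
    simp [mink, Pt]; ring
  have m21 : mink (Pt a h₂) (Pt 0 h₁) =
      Real.cosh a * (Real.cosh h₁ * Real.cosh h₂) - Real.sinh h₁ * Real.sinh h₂ := by
    simp [mink, Pt]; ring
  have m1B1 : mink (Pt 0 h₁) (Pt 0 0) = Real.cosh h₁ := by
    simp [mink, Pt]
  have m2B1 : mink (Pt a h₂) (Pt 0 0) = Real.cosh a * Real.cosh h₂ := by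
    simp [mink, Pt]
  have m2B2 : mink (Pt a h₂) (Pt a 0) = Real.cosh h₂ := by
    simp [mink, Pt]
    linear_combination Real.cosh h₂ * Real.cosh_sq_sub_sinh_sq a
  have m1B2 : mink (Pt 0 h₁) (Pt a 0) = Real.cosh a * Real.cosh h₁ := by
    simp [mink, Pt]; ring
  have hsq1 : Real.sqrt (Real.cosh h₁ ^ 2 - 1) = Real.sinh h₁ := by
    rw [show Real.cosh h₁ ^ 2 - 1 = Real.sinh h₁ ^ 2 by linarith]
    exact Real.sqrt_sq hy1.le
  have hsq2 : Real.sqrt (Real.cosh h₂ ^ 2 - 1) = Real.sinh h₂ := by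
    rw [show Real.cosh h₂ ^ 2 - 1 = Real.sinh h₂ ^ 2 by linarith]
    exact Real.sqrt_sq hy2.le
  unfold hangle hdist _root_.arcosh
  rw [m12, m21, m1B1, m2B1, m2B2, m1B2, hsq1, hsq2]
  set A := Real.cosh a with hAdef
  set x1 := Real.cosh h₁ with hx1def
  set y1 := Real.sinh h₁ with hy1def
  set x2 := Real.cosh h₂ with hx2def
  set y2 := Real.sinh h₂ with hy2def
  set c := A * (x1 * x2) - y1 * y2 with hcdef
  set p := A * x2 * y1 - x1 * y2 with hpdef
  set q := A * x1 * y2 - x2 * y1 with hqdef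
  set S := Real.sqrt (c ^ 2 - 1) with hSdef
  -- basic facts
  have hc1 : 1 < c := by
    have h0 : A * (1 + y1 * y2) ≤ A * (x1 * x2) :=
      mul_le_mul_of_nonneg_left hx1x2' (by linarith)
    nlinarith [mul_pos hy1 hy2]
  have hc2 : (0:ℝ) < c ^ 2 - 1 := by nlinarith
  have hS2 : S ^ 2 = c ^ 2 - 1 := Real.sq_sqrt hc2.le
  have hS0 : 0 < S := Real.sqrt_pos.mpr hc2
  have hA2 : (0:ℝ) < A ^ 2 - 1 := by nlinarith
  have hps : c ^ 2 - 1 - p ^ 2 = (A ^ 2 - 1) * (1 + y2 ^ 2) := by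
    rw [hcdef, hpdef]
    linear_combination (A ^ 2 * x2 ^ 2 - y2 ^ 2) * py1 + A ^ 2 * py2
  have hqs : c ^ 2 - 1 - q ^ 2 = (A ^ 2 - 1) * (1 + y1 ^ 2) := by
    rw [hcdef, hqdef]
    linear_combination (A ^ 2 * x2 ^ 2 - A ^ 2 * y2 ^ 2) * py1 +
      (A ^ 2 + A ^ 2 * y1 ^ 2 - y1 ^ 2) * py2
  have hp2 : p ^ 2 < S ^ 2 := by
    rw [hS2]
    nlinarith [mul_nonneg hA2.le (sq_nonneg y2)]
  have hq2 : q ^ 2 < S ^ 2 := by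
    rw [hS2]
    nlinarith [mul_nonneg hA2.le (sq_nonneg y1)]
  have hpq : 0 ≤ p + q := by
    have hpqe : p + q = (A - 1) * (x2 * y1 + x1 * y2) := by rw [hpdef, hqdef]; ring
    rw [hpqe]
    apply mul_nonneg (by linarith)
    have := mul_nonneg (by linarith : (0:ℝ) ≤ x2) hy1.le
    have := mul_nonneg (by linarith : (0:ℝ) ≤ x1) hy2.le
    linarith
  have hQ : 0 ≤ c ^ 2 - 1 + p * q - c * (p + q) := by
    have hfact : c ^ 2 - 1 + p * q - c * (p + q) =
        (A - 1) * ((x1 - y1) * ((x2 - y2) * ((x1 + y1) * (x2 + y2) + c))) := by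
      rw [hcdef, hpdef, hqdef]
      linear_combination (x2 ^ 2 - y2 ^ 2) * py1 + py2
    rw [hfact]
    have hbr : 0 < (x1 + y1) * (x2 + y2) + c := by
      have := mul_pos (show (0:ℝ) < x1 + y1 by linarith) (show (0:ℝ) < x2 + y2 by linarith)
      linarith
    exact le_of_lt (mul_pos (by linarith) (mul_pos h11' (mul_pos h22' hbr)))
  -- rewrite the angle arguments
  have hnum1 : c * x1 - A * x2 = y1 * p := by
    rw [hcdef, hpdef]; linear_combination A * x2 * py1
  have hnum2 : c * x2 - A * x1 = y2 * q := by
    rw [hcdef, hqdef]; linear_combination A * x1 * py2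
  rw [show (c * x1 - A * x2) / (S * y1) = p / S by
      rw [hnum1, mul_comm S y1, mul_div_mul_left _ _ hy1.ne'],
    show (c * x2 - A * x1) / (S * y2) = q / S by
      rw [hnum2, mul_comm S y2, mul_div_mul_left _ _ hy2.ne']]
  rw [Real.arccos_eq_pi_div_two_sub_arcsin, Real.arccos_eq_pi_div_two_sub_arcsin]
  have final := main_ineq c p q S hc1 hS2 hS0 hp2 hq2 hpq hQ
  linarith
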